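/- For every nonempty partition λ there exist integers d_{λ,μ}, indexed by the partitions μ of |λ|+1 with μ < (λ,1) in the lexicographic order, such that D_{u₀u₁}(u_λ) = (|λ| + ℓ(λ) − m₁(λ) − 1)·u_λ·u₁ + ∂ₓ(u₀·u_λ) + ∑_{μ∈𝒫_{|λ|+1}, μ<(λ,1)} d_{λ,μ}·u_μ. -/

import Mathlib

open scoped Classical
open PowerSeries

noncomputable section

namespace RiemannPaper

/-- ℂ[[u₀]] -/
abbrev RR : Type := PowerSeries ℂ
/-- 𝒜 = ℂ[[u₀]][u₁,u₂,…] -/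
abbrev AA : Type := MvPolynomial ℕ+ RR
/-- 𝒜̂ = 𝒜[[ε]] -/
abbrev AH : Type := PowerSeries AA

/-- the variable uₙ as an element of 𝒜 (u₀ is the power-series variable of the coefficients) -/
def uv (n : ℕ) : AA :=
  if h : 0 < n then MvPolynomial.X (⟨n, h⟩ : ℕ+) else MvPolynomial.C PowerSeries.X

/-- ∂/∂u₀ on 𝒜 -/
def pd0 (f : AA) : AA :=
  ∑ m ∈ f.support, MvPolynomial.monomial m (PowerSeries.derivativeFun (MvPolynomial.coeff m f))

/-- ∂/∂uₙ on 𝒜 -/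
def pdA : ℕ → AA → AA
  | 0 => pd0
  | (n+1) => fun f => MvPolynomial.pderiv (⟨n+1, n.succ_pos⟩ : ℕ+) f

/-- ∂ₓ on 𝒜 -/
def dxA (f : AA) : AA := ∑ᶠ n : ℕ, uv (n+1) * pdA n f

/-- coefficientwise (ℂ[[ε]]-linear) extension of an operator on 𝒜 to 𝒜̂ -/
def lift1 (F : AA → AA) (h : AH) : AH := PowerSeries.mk fun k => F (PowerSeries.coeff k h)

/-- ∂ₓ on 𝒜̂ -/
def dxH : AH → AH := lift1 dxA
/-- ∂/∂uₙ on 𝒜̂ -/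
def pdH (n : ℕ) : AH → AH := lift1 (pdA n)
def negDxA (f : AA) : AA := -dxA f
def negDxH (h : AH) : AH := -dxH h

/-- evolutionary operator D_P = ∑ₙ (∂ₓⁿP)·∂/∂uₙ on 𝒜 -/
def DopA (P f : AA) : AA := ∑ᶠ n : ℕ, (dxA^[n] P) * pdA n f
/-- evolutionary operator D_P on 𝒜̂ -/
def DopH (P f : AH) : AH :=
  PowerSeries.mk fun k => ∑ᶠ n : ℕ, PowerSeries.coeff k ((dxH^[n] P) * pdH n f)

/-- variational derivative δ/δu = ∑ₙ(−∂ₓ)ⁿ∘∂/∂uₙ on 𝒜 -/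
def varDA (f : AA) : AA := ∑ᶠ n : ℕ, negDxA^[n] (pdA n f)
/-- variational derivative on 𝒜̂ -/
def varD (f : AH) : AH :=
  PowerSeries.mk fun k => ∑ᶠ n : ℕ, PowerSeries.coeff k (negDxH^[n] (pdH n f))

/-- weighted degree of a monomial, deg uₙ = n -/
def wdeg (m : ℕ+ →₀ ℕ) : ℕ := m.sum fun i e => (i : ℕ) * e
/-- f is homogeneous of differential degree d -/
def homogA (f : AA) (d : ℤ) : Prop := ∀ m ∈ f.support, (wdeg m : ℤ) = d
/-- f ∈ 𝒜̂_d (deg ε = −1) -/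
def memAH (d : ℤ) (f : AH) : Prop := ∀ k : ℕ, homogA (PowerSeries.coeff k f) (d + k)

/-- Im ∂ₓ ⊕ ℂ ⊂ 𝒜, so that Λ = 𝒜/NA -/
def NA : Submodule ℂ AA := Submodule.span ℂ (Set.range dxA ∪ Set.range (algebraMap ℂ AA))
/-- Im ∂ₓ ⊕ ℂ[[ε]] ⊂ 𝒜̂, so that Λ̂ = 𝒜̂/NH -/
def NH : Submodule ℂ AH :=
  Submodule.span ℂ (Set.range dxH ∪ Set.range (⇑(PowerSeries.map (algebraMap ℂ AA))))

/-- ε ∈ 𝒜̂ -/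
def epsH : AH := PowerSeries.X
/-- uₙ as an element of 𝒜̂ -/
def uH (n : ℕ) : AH := PowerSeries.C (uv n)

/-- a differential operator K = ∑ᵢ Kᵢ∂ₓ^i (finite sum) applied to f -/
def opApply (K : ℕ →₀ AH) (f : AH) : AH := K.sum fun i c => c * dxH^[i] f
/-- L(Q) = ∑ₙ(∂Q/∂uₙ)∂ₓⁿ applied to f -/
def Lapp (Q f : AH) : AH :=
  PowerSeries.mk fun k => ∑ᶠ n : ℕ, PowerSeries.coeff k (pdH n Q * dxH^[n] f)
/-- L(Q)† = ∑ₙ(−∂ₓ)ⁿ∘(∂Q/∂uₙ) applied to f -/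
def LadjApp (Q f : AH) : AH :=
  PowerSeries.mk fun k => ∑ᶠ n : ℕ, PowerSeries.coeff k (negDxH^[n] (pdH n Q * f))

/-- canonical representative of the bracket {f̄,h̄}_K = ∫ δf̄/δu · K(δh̄/δu) dx -/
def brRep (K : ℕ →₀ AH) (f h : AH) : AH := varD f * opApply K (varD h)
/-- K is a Poisson operator: the bracket is skew-symmetric and satisfies Jacobi (in Λ̂) -/
def IsPoisson (K : ℕ →₀ AH) : Prop :=
  (∀ f h : AH, brRep K f h + brRep K h f ∈ NH) ∧
  (∀ f g h : AH,
    brRep K (brRep K f g) h + brRep K (brRep K g h) f + brRep K (brRep K h f) g ∈ NH)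

/-- K has degree 1 -/
def opDeg1 (K : ℕ →₀ AH) : Prop := ∀ i : ℕ, memAH (1 - (i : ℤ)) (K i)
/-- K|_{ε=0} = ∂ₓ -/
def opEps0Dx (K : ℕ →₀ AH) : Prop :=
  ∀ i : ℕ, PowerSeries.coeff 0 (K i) = if i = 1 then 1 else 0

/-- g ∈ ℂ[[u₀]] as an element of 𝒜̂ -/
def cH (g : RR) : AH := PowerSeries.C (MvPolynomial.C g)
/-- truncation of an element of 𝒜̂ keeping the ε-coefficients up to εᵏ -/
def truncAH (k : ℕ) (h : AH) : AH :=
  ∑ i ∈ Finset.range (k+1), (PowerSeries.monomial i) (PowerSeries.coeff i h)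
/-- the Taylor evaluation g(w) for g ∈ ℂ[[u₀]] and w ≡ u₀ mod ε -/
def tayl (g : RR) (w : AH) : AH := PowerSeries.mk fun k =>
  PowerSeries.coeff k (∑ j ∈ Finset.range (k+1),
    ((j.factorial : ℂ))⁻¹ • (cH (PowerSeries.derivativeFun^[j] g) * (w - uH 0) ^ j))

/-- S is the substitution map S_w, the unique continuous ℂ[[ε]]-algebra endomorphism of 𝒜̂
with S(uₙ) = ∂ₓⁿ(w) -/
structure IsSubst (w : AH) (S : AH → AH) : Prop where
  map_add : ∀ a b, S (a + b) = S a + S b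
  map_mul : ∀ a b, S (a * b) = S a * S b
  map_one : S 1 = 1
  map_smul : ∀ (c : ℂ) (a), S (c • a) = c • S a
  map_eps : ∀ a, S (epsH * a) = epsH * S a
  map_u : ∀ n : ℕ, S (uH n) = dxH^[n] w
  map_ps : ∀ g : RR, S (cH g) = tayl g w
  cont : ∀ a (k : ℕ),
    PowerSeries.coeff k (S a) = PowerSeries.coeff k (S (truncAH k a))

/-- w is a Miura transformation: w = u₀ + εf, f ∈ 𝒜̂₁ -/
def isMiura (w : AH) : Prop := ∃ f : AH, memAH 1 f ∧ w = uH 0 + epsH * f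
/-- w belongs to Mi_{∂ₓ}: L(w)∘∂ₓ∘L(w)† = ∂ₓ -/
def inMiDx (w : AH) : Prop := ∀ f : AH, Lapp w (dxH (LadjApp w f)) = dxH f
/-- w is a normal Miura transformation: w = u₀ + ∂ₓ²P, P ∈ 𝒜̂₋₂ -/
def isNormalMiura (w : AH) : Prop := ∃ P : AH, memAH (-2) P ∧ w = uH 0 + dxH (dxH P)

/-- u_λ = ∏ᵢ u_{λᵢ} -/
def uP {n : ℕ} (l : n.Partition) : AA := (l.parts.map uv).prod
/-- the parts of λ sorted in decreasing order -/
def sortedParts {n : ℕ} (l : n.Partition) : List ℕ := (l.parts.sort (· ≤ ·)).reverse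
/-- lexicographic order on partitions -/
def lexLt {n : ℕ} (l m : n.Partition) : Prop :=
  List.Lex (· < ·) (sortedParts l) (sortedParts m)
def lexLe {n : ℕ} (l m : n.Partition) : Prop := lexLt l m ∨ l = m
/-- λ ∈ 𝒫ₙ°: at least two parts and λ₁ = λ₂ -/
def Pcirc {n : ℕ} (l : n.Partition) : Prop :=
  2 ≤ Multiset.card l.parts ∧ (sortedParts l).getD 0 0 = (sortedParts l).getD 1 0
/-- λ ∈ 𝒫ₙ′: λ ∈ 𝒫ₙ° and all parts ≥ 2 -/
def Pprime {n : ℕ} (l : n.Partition) : Prop := Pcirc l ∧ ∀ i ∈ l.parts, 2 ≤ i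
/-- (λ,1): adjoin a part equal to 1 -/
def addOne {n : ℕ} (l : n.Partition) : (n+1).Partition where
  parts := 1 ::ₘ l.parts
  parts_pos := by
    intro i hi
    rcases Multiset.mem_cons.mp hi with h | h
    · simp [h]
    · exact l.parts_pos h
  parts_sum := by simp [l.parts_sum, add_comm]


/-! ### Auxiliary infrastructure -/

section Aux

lemma dF_zero : PowerSeries.derivativeFun (0 : RR) = 0 := by
  ext n
  simp [PowerSeries.derivativeFun]

lemma dF_sum {α : Type*} (s : Finset α) (f : α → RR) :
    PowerSeries.derivativeFun (∑ x ∈ s, f x) = ∑ x ∈ s, PowerSeries.derivativeFun (f x) := by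
  classical
  induction s using Finset.induction_on with
  | empty => simpa using dF_zero
  | insert _ _ h ih =>
    rw [Finset.sum_insert h, Finset.sum_insert h, PowerSeries.derivativeFun_add, ih]

lemma dF_X : PowerSeries.derivativeFun (PowerSeries.X : RR) = 1 := by
  ext n
  rw [show PowerSeries.derivativeFun (PowerSeries.X : RR) = PowerSeries.derivative ℂ PowerSeries.X from rfl, PowerSeries.coeff_derivativeFun]
  cases n with
  | zero => simp
  | succ k => simp [PowerSeries.coeff_X, PowerSeries.coeff_one]

lemma pdA_zero_eq : pdA 0 = pd0 := rfl

lemma coeff_pd0 (f : AA) (m : ℕ+ →₀ ℕ) :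
    MvPolynomial.coeff m (pd0 f) = PowerSeries.derivativeFun (MvPolynomial.coeff m f) := by
  classical
  rw [pd0]
  rw [MvPolynomial.coeff_sum]
  by_cases hm : m ∈ f.support
  · rw [Finset.sum_eq_single m]
    · simp [MvPolynomial.coeff_monomial]
    · intro b _ hb; simp [MvPolynomial.coeff_monomial, hb]
    · intro h; exact absurd hm h
  · have h0 : MvPolynomial.coeff m f = 0 := by
      simpa [MvPolynomial.mem_support_iff] using hm
    rw [h0, dF_zero]
    rw [Finset.sum_eq_zero]
    intro b hb
    have hbm : b ≠ m := by rintro rfl; exact hm hb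
    simp [MvPolynomial.coeff_monomial, hbm]

lemma pd0_add (f g : AA) : pd0 (f + g) = pd0 f + pd0 g := by
  apply MvPolynomial.ext
  intro m
  simp [coeff_pd0, MvPolynomial.coeff_add, PowerSeries.derivativeFun_add]

lemma pd0_mul (f g : AA) : pd0 (f * g) = pd0 f * g + f * pd0 g := by
  apply MvPolynomial.ext
  intro m
  rw [coeff_pd0, MvPolynomial.coeff_add, MvPolynomial.coeff_mul, MvPolynomial.coeff_mul,
    MvPolynomial.coeff_mul, dF_sum]
  rw [← Finset.sum_add_distrib]
  apply Finset.sum_congr rfl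
  intro p _
  have h := PowerSeries.derivativeFun_mul
      (MvPolynomial.coeff p.1 f) (MvPolynomial.coeff p.2 g)
  rw [smul_eq_mul, smul_eq_mul] at h
  rw [h, coeff_pd0, coeff_pd0]
  ring

lemma pdA_add (k : ℕ) (f g : AA) : pdA k (f + g) = pdA k f + pdA k g := by
  cases k with
  | zero => exact pd0_add f g
  | succ n => exact map_add _ f g

lemma pdA_mul (k : ℕ) (f g : AA) : pdA k (f * g) = pdA k f * g + f * pdA k g := by
  cases k with
  | zero => exact pd0_mul f g
  | succ n => exact MvPolynomial.pderiv_mul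

lemma pdA_uv (k j : ℕ) : pdA k (uv j) = if j = k then 1 else 0 := by
  cases k with
  | zero =>
    rw [pdA_zero_eq]
    cases j with
    | zero =>
      rw [if_pos rfl]
      apply MvPolynomial.ext
      intro m
      rw [coeff_pd0]
      simp only [uv, dif_neg (lt_irrefl 0)]
      by_cases hm : m = 0
      · subst hm
        simp only [MvPolynomial.coeff_C, if_pos rfl, MvPolynomial.coeff_one]
        simp only [if_true]
        exact dF_X
      · rw [MvPolynomial.coeff_C, if_neg (by exact fun h => hm h.symm), dF_zero,
          MvPolynomial.coeff_one, if_neg (by exact fun h => hm h.symm)]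
    | succ i =>
      apply MvPolynomial.ext
      intro m
      rw [coeff_pd0]
      simp only [uv, dif_pos i.succ_pos, Nat.succ_ne_zero, if_false]
      erw [MvPolynomial.coeff_X']
      by_cases hm : Finsupp.single (⟨i+1, i.succ_pos⟩ : ℕ+) 1 = m
      · erw [if_pos hm]
        simpa using PowerSeries.derivativeFun_one (R := ℂ)
      · erw [if_neg hm, dF_zero, MvPolynomial.coeff_zero]
  | succ n =>
    cases j with
    | zero =>
      simp only [pdA, uv, dif_neg (lt_irrefl 0), Nat.zero_eq, if_neg (Nat.succ_ne_zero n).symm]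
      exact MvPolynomial.pderiv_C
    | succ i =>
      simp only [pdA, uv, dif_pos i.succ_pos]
      erw [MvPolynomial.pderiv_X]
      by_cases h : i + 1 = n + 1
      · have he : (⟨i+1, i.succ_pos⟩ : ℕ+) = ⟨n+1, n.succ_pos⟩ := by
          ext; exact h
        rw [if_pos h, he, Pi.single_eq_same]; rfl
      · have he : (⟨i+1, i.succ_pos⟩ : ℕ+) ≠ ⟨n+1, n.succ_pos⟩ := by
          intro hc; apply h; exact congrArg (Subtype.val) hc
        rw [if_neg h, Pi.single_eq_of_ne he]; rfl

end Aux
section Aux2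

/-- product of variables indexed by a multiset -/
def uu (s : Multiset ℕ) : AA := (s.map uv).prod

lemma uu_zero : uu 0 = 1 := rfl

lemma uu_cons (a : ℕ) (s : Multiset ℕ) : uu (a ::ₘ s) = uv a * uu s := by
  simp [uu]

lemma uu_add (s t : Multiset ℕ) : uu (s + t) = uu s * uu t := by
  simp [uu]

lemma pdA_one (k : ℕ) : pdA k (1 : AA) = 0 := by
  have h : pdA k (1 : AA) = pdA k 1 + pdA k 1 := by
    simpa using pdA_mul k 1 1
  exact right_eq_add.mp h

lemma pdA_uu (k : ℕ) (s : Multiset ℕ) :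
    pdA k (uu s) = (s.count k) • uu (s.erase k) := by
  classical
  induction s using Multiset.induction_on with
  | empty => simp [uu_zero, pdA_one]
  | cons a s ih =>
    rw [uu_cons, pdA_mul, pdA_uv, ih]
    by_cases hak : a = k
    · subst hak
      rw [if_pos rfl, Multiset.count_cons_self, Multiset.erase_cons_head, one_mul]
      by_cases hks : a ∈ s
      · rw [mul_smul_comm, ← uu_cons, Multiset.cons_erase hks, succ_nsmul, add_comm]
      · simp [Multiset.count_eq_zero_of_notMem hks]
    · rw [if_neg hak, zero_mul, zero_add,
        Multiset.count_cons_of_ne (by exact fun h => hak h.symm),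
        Multiset.erase_cons_tail _ (by exact fun h => hak h), uu_cons, mul_smul_comm]

lemma pdA_supp_finite (f : AA) : (Function.support fun n => pdA n f).Finite := by
  classical
  apply Set.Finite.subset
    ((f.vars.finite_toSet.image (fun i : ℕ+ => (i : ℕ))).insert 0)
  intro n hn
  cases n with
  | zero => exact Set.mem_insert _ _
  | succ m =>
    apply Set.mem_insert_iff.mpr
    refine Or.inr ⟨⟨m+1, m.succ_pos⟩, ?_, rfl⟩
    by_contra hv
    exact hn (MvPolynomial.pderiv_eq_zero_of_notMem_vars hv)

lemma supp_mul_left_finite (f : AA) (g : ℕ → AA) (h : (Function.support g).Finite) :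
    (Function.support fun n => uv (n+1) * g n).Finite := by
  apply h.subset
  intro n hn
  simp only [Function.mem_support] at hn ⊢
  intro h0; apply hn; rw [h0, mul_zero]

lemma dxA_add (f g : AA) : dxA (f + g) = dxA f + dxA g := by
  rw [dxA, dxA, dxA, ← finsum_add_distrib (supp_mul_left_finite f _ (pdA_supp_finite f))
    (supp_mul_left_finite g _ (pdA_supp_finite g))]
  apply finsum_congr
  intro n
  rw [pdA_add, mul_add]

lemma dxA_mul (f g : AA) : dxA (f * g) = dxA f * g + f * dxA g := by
  rw [dxA, dxA, dxA]
  have h1 : (∑ᶠ n : ℕ, uv (n+1) * pdA n f) * g = ∑ᶠ n : ℕ, uv (n+1) * pdA n f * g :=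
    finsum_mul' _ g (supp_mul_left_finite f _ (pdA_supp_finite f))
  have h2 : f * (∑ᶠ n : ℕ, uv (n+1) * pdA n g) = ∑ᶠ n : ℕ, f * (uv (n+1) * pdA n g) :=
    mul_finsum' _ f (supp_mul_left_finite g _ (pdA_supp_finite g))
  rw [h1, h2, ← finsum_add_distrib]
  · apply finsum_congr
    intro n
    rw [pdA_mul, mul_add]
    ring
  · apply Set.Finite.subset (supp_mul_left_finite f _ (pdA_supp_finite f))
    intro n hn
    simp only [Function.mem_support] at hn ⊢
    intro h0; apply hn; rw [h0, zero_mul]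
  · apply Set.Finite.subset (supp_mul_left_finite g _ (pdA_supp_finite g))
    intro n hn
    simp only [Function.mem_support] at hn ⊢
    intro h0; apply hn; rw [h0, mul_zero]

lemma dxA_uv (m : ℕ) : dxA (uv m) = uv (m + 1) := by
  rw [dxA]
  rw [finsum_eq_single _ m]
  · rw [pdA_uv, if_pos rfl, mul_one]
  · intro n hn
    rw [pdA_uv, if_neg (by exact fun h => hn h.symm), mul_zero]

/-- `dxA` as an additive monoid hom -/
def dxAHom : AA →+ AA := AddMonoidHom.mk' dxA dxA_add

lemma dxA_eq_hom : dxA = dxAHom := rfl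

lemma dxA_nsmul (c : ℕ) (f : AA) : dxA (c • f) = c • dxA f := by
  rw [dxA_eq_hom]; exact dxAHom.map_nsmul c f

lemma dxA_zsmul (c : ℤ) (f : AA) : dxA (c • f) = c • dxA f := by
  rw [dxA_eq_hom]; exact dxAHom.map_zsmul c f

lemma dxA_sum {α : Type*} (s : Finset α) (f : α → AA) :
    dxA (∑ x ∈ s, f x) = ∑ x ∈ s, dxA (f x) := by
  rw [dxA_eq_hom]; exact map_sum dxAHom f s

end Aux2
section Aux3

lemma dxA_uu (s : Multiset ℕ) :
    dxA (uu s) = ∑ k ∈ s.toFinset, (s.count k) • (uv (k+1) * uu (s.erase k)) := by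
  classical
  rw [dxA]
  have h : ∀ n : ℕ, uv (n+1) * pdA n (uu s) = (s.count n) • (uv (n+1) * uu (s.erase n)) := by
    intro n; rw [pdA_uu, mul_smul_comm]
  rw [finsum_congr h]
  apply finsum_eq_sum_of_support_subset
  intro n hn
  simp only [Function.mem_support] at hn
  rw [Finset.mem_coe, Multiset.mem_toFinset, ← Multiset.count_pos]
  by_contra hc
  exact hn (by rw [Nat.eq_zero_of_not_pos hc, zero_smul])

lemma dx_iter_u0u1 (k : ℕ) :
    dxA^[k] (uv 0 * uv 1) =
      ∑ j ∈ Finset.range (k+1), (k.choose j) • (uv j * uv (k+1-j)) := by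
  induction k with
  | zero => simp
  | succ k ih =>
    rw [Function.iterate_succ_apply', ih, dxA_sum]
    have hterm : ∀ j ∈ Finset.range (k+1),
        dxA ((k.choose j) • (uv j * uv (k+1-j)))
          = (k.choose j) • (uv (j+1) * uv (k+2-(j+1)))
            + (k.choose j) • (uv j * uv (k+2-j)) := by
      intro j hj
      have hjk : j ≤ k := Nat.lt_succ_iff.mp (Finset.mem_range.mp hj)
      have h1 : k+1-j+1 = k+2-j := by omega
      have h2 : k+2-(j+1) = k+1-j := by omega
      rw [dxA_nsmul, dxA_mul, dxA_uv, dxA_uv, smul_add, h1, h2]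
    rw [Finset.sum_congr rfl hterm, Finset.sum_add_distrib]
    have hr : ∑ j ∈ Finset.range (k+2), ((k+1).choose j) • (uv j * uv (k+2-j))
        = ∑ j ∈ Finset.range (k+1), ((k+1).choose (j+1)) • (uv (j+1) * uv (k+2-(j+1)))
          + ((k+1).choose 0) • (uv 0 * uv (k+2-0)) :=
      Finset.sum_range_succ' (fun j => ((k+1).choose j) • (uv j * uv (k+2-j))) (k+1)
    rw [hr]
    have hp : ∀ j ∈ Finset.range (k+1),
        ((k+1).choose (j+1)) • (uv (j+1) * uv (k+2-(j+1)))
        = (k.choose j) • (uv (j+1) * uv (k+2-(j+1)))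
          + (k.choose (j+1)) • (uv (j+1) * uv (k+2-(j+1))) := by
      intro j hj
      rw [Nat.choose_succ_succ, add_smul]
    rw [Finset.sum_congr rfl hp, Finset.sum_add_distrib]
    have hs : ∑ j ∈ Finset.range (k+1), (k.choose (j+1)) • (uv (j+1) * uv (k+2-(j+1)))
          + (k.choose 0) • (uv 0 * uv (k+2-0))
        = ∑ j ∈ Finset.range (k+2), (k.choose j) • (uv j * uv (k+2-j)) :=
      (Finset.sum_range_succ' (fun j => (k.choose j) • (uv j * uv (k+2-j))) (k+1)).symm
    have hs2 : ∑ j ∈ Finset.range (k+2), (k.choose j) • (uv j * uv (k+2-j))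
        = ∑ j ∈ Finset.range (k+1), (k.choose j) • (uv j * uv (k+2-j))
          + (k.choose (k+1)) • (uv (k+1) * uv (k+2-(k+1))) :=
      Finset.sum_range_succ (fun j => (k.choose j) • (uv j * uv (k+2-j))) (k+1)
    rw [Nat.choose_succ_self, zero_smul, add_zero] at hs2
    have hchoose0 : ((k+1).choose 0) • (uv 0 * uv (k+2-0))
        = (k.choose 0) • (uv 0 * uv (k+2-0)) := by simp
    rw [hchoose0, add_assoc, hs, hs2]

lemma DopA_uu (P : AA) (s : Multiset ℕ) :
    DopA P (uu s) = ∑ k ∈ s.toFinset, (s.count k) • (dxA^[k] P * uu (s.erase k)) := by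
  classical
  rw [DopA]
  have h : ∀ n : ℕ, dxA^[n] P * pdA n (uu s) = (s.count n) • (dxA^[n] P * uu (s.erase n)) := by
    intro n; rw [pdA_uu, mul_smul_comm]
  rw [finsum_congr h]
  apply finsum_eq_sum_of_support_subset
  intro n hn
  simp only [Function.mem_support] at hn
  rw [Finset.mem_coe, Multiset.mem_toFinset, ← Multiset.count_pos]
  by_contra hc
  exact hn (by rw [Nat.eq_zero_of_not_pos hc, zero_smul])

end Aux3
section Aux4

lemma list_lex_of_count (L₂ : List ℕ) : ∀ (L₁ : List ℕ), L₁.Pairwise (· ≥ ·) →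
    L₂.Pairwise (· ≥ ·) → ∀ e : ℕ, L₁.count e < L₂.count e →
    (∀ f, e < f → L₁.count f = L₂.count f) → List.Lex (· < ·) L₁ L₂ := by
  induction L₂ with
  | nil =>
    intro L₁ _ _ e h1 _
    simp at h1
  | cons b t₂ ih =>
    intro L₁ hs1 hs2 e h1 h2
    cases L₁ with
    | nil => exact List.Lex.nil
    | cons a t₁ =>
      rcases lt_trichotomy a b with hab | hab | hab
      · exact List.Lex.rel hab
      · subst hab
        apply List.Lex.cons
        apply ih t₁ (List.pairwise_cons.mp hs1).2 (List.pairwise_cons.mp hs2).2 e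
        · have e1 := List.count_cons (a := e) (b := a) (l := t₁)
          have e2 := List.count_cons (a := e) (b := a) (l := t₂)
          simp only [beq_iff_eq] at e1 e2
          rw [e1, e2] at h1
          omega
        · intro f hf
          have e1 := List.count_cons (a := f) (b := a) (l := t₁)
          have e2 := List.count_cons (a := f) (b := a) (l := t₂)
          simp only [beq_iff_eq] at e1 e2
          have := h2 f hf
          rw [e1, e2] at this
          omega
      · exfalso
        have hbound : ∀ x ∈ b :: t₂, x ≤ b := by
          intro x hx
          rcases List.mem_cons.mp hx with rfl | hx
          · exact le_refl x
          · exact (List.pairwise_cons.mp hs2).1 x hx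
        by_cases hae : a ≤ e
        · have hbe : b < e := lt_of_lt_of_le hab hae
          have : (b :: t₂).count e = 0 := by
            rw [List.count_eq_zero]
            intro hmem
            exact absurd (hbound e hmem) (not_le.mpr hbe)
          omega
        · push_neg at hae
          have hc2 : (b :: t₂).count a = 0 := by
            rw [List.count_eq_zero]
            intro hmem
            exact absurd (hbound a hmem) (not_le.mpr hab)
          have hc1 : 0 < (a :: t₁).count a := by
            rw [List.count_pos_iff]
            exact List.mem_cons_self
          have := h2 a hae
          omega

lemma sortedParts_sorted {N : ℕ} (p : N.Partition) :
    (sortedParts p).Pairwise (· ≥ ·) := by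
  rw [sortedParts]
  rw [List.pairwise_reverse]
  exact Multiset.pairwise_sort p.parts (· ≤ ·)

lemma sortedParts_count {N : ℕ} (p : N.Partition) (e : ℕ) :
    (sortedParts p).count e = p.parts.count e := by
  rw [sortedParts, List.count_reverse]
  conv_rhs => rw [← Multiset.sort_eq p.parts (· ≤ ·), Multiset.coe_count]

lemma lexLt_of_counts {N : ℕ} (p q : N.Partition) (e : ℕ)
    (h1 : p.parts.count e < q.parts.count e)
    (h2 : ∀ f, e < f → p.parts.count f = q.parts.count f) : lexLt p q := by
  rw [lexLt]
  apply list_lex_of_count _ _ (sortedParts_sorted p) (sortedParts_sorted q) e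
  · rw [sortedParts_count, sortedParts_count]; exact h1
  · intro f hf
    rw [sortedParts_count, sortedParts_count]
    exact h2 f hf

lemma lex_mu {n : ℕ} (l : n.Partition) (k j : ℕ) (hk : k ∈ l.parts)
    (hj2 : 2 ≤ j) (hjk : j ≤ k - 1) (μ : (n+1).Partition)
    (hμ : μ.parts = j ::ₘ (k+1-j) ::ₘ l.parts.erase k) : lexLt μ (addOne l) := by
  have hk3 : 3 ≤ k := by omega
  have hm2 : 2 ≤ k + 1 - j := by omega
  have hmk : k + 1 - j ≤ k - 1 := by omega
  apply lexLt_of_counts _ _ k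
  · rw [hμ]
    show Multiset.count k _ < Multiset.count k (addOne l).parts
    have h1 : (addOne l).parts = 1 ::ₘ l.parts := rfl
    rw [h1, Multiset.count_cons, Multiset.count_cons, Multiset.count_cons,
      if_neg (by omega : ¬ k = j), if_neg (by omega : ¬ k = k + 1 - j),
      if_neg (by omega : ¬ k = 1), Multiset.count_erase_self]
    have : 0 < Multiset.count k l.parts := Multiset.count_pos.mpr hk
    omega
  · intro f hf
    rw [hμ]
    show Multiset.count f _ = Multiset.count f (addOne l).parts
    have h1 : (addOne l).parts = 1 ::ₘ l.parts := rfl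
    rw [h1, Multiset.count_cons, Multiset.count_cons, Multiset.count_cons,
      if_neg (by omega : ¬ f = j), if_neg (by omega : ¬ f = k + 1 - j),
      if_neg (by omega : ¬ f = 1),
      Multiset.count_erase_of_ne (by omega : f ≠ k)]

lemma part_ext {N : ℕ} (p q : N.Partition) (h : p.parts = q.parts) : p = q :=
  Nat.Partition.ext h

end Aux4

section Aux5

lemma uP_eq_uu {N : ℕ} (p : N.Partition) : uP p = uu p.parts := rfl

lemma sum_count_mul (s : Multiset ℕ) : ∑ k ∈ s.toFinset, s.count k * k = s.sum := by
  classical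
  have h := Finset.sum_multiset_map_count s (id : ℕ → ℕ)
  simp only [smul_eq_mul, id] at h
  exact h.symm.trans (by rw [Multiset.map_id'])

lemma perK (s : Multiset ℕ) (k : ℕ) (hk1 : 1 ≤ k) (hk : k ∈ s) :
    ∑ j ∈ Finset.range (k+1), (s.count k * k.choose j) • uu (j ::ₘ (k+1-j) ::ₘ s.erase k)
    = s.count k • uu (0 ::ₘ (k+1) ::ₘ s.erase k)
      + (s.count k * (k + 1 - if k = 1 then 1 else 0)) • uu (1 ::ₘ s)
      + ∑ j ∈ Finset.Icc 2 (k-1),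
          (s.count k * k.choose j) • uu (j ::ₘ (k+1-j) ::ₘ s.erase k) := by
  classical
  rcases Nat.lt_or_ge k 2 with hk2 | hk2
  · have h1 : k = 1 := by omega
    subst h1
    rw [Finset.sum_range_succ, Finset.sum_range_one]
    rw [Finset.Icc_eq_empty (by omega), Finset.sum_empty, add_zero]
    rw [show (1:ℕ)+1-0 = 2 by omega, show (1:ℕ)+1-1 = 1 by omega, Multiset.cons_erase hk]
    norm_num
  · have hsplit : Finset.range (k+1) = insert 0 (insert 1 (insert k (Finset.Icc 2 (k-1)))) := by
      ext x
      simp only [Finset.mem_range, Finset.mem_insert, Finset.mem_Icc]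
      omega
    rw [hsplit,
      Finset.sum_insert (by simp only [Finset.mem_insert, Finset.mem_Icc]; omega),
      Finset.sum_insert (by simp only [Finset.mem_insert, Finset.mem_Icc]; omega),
      Finset.sum_insert (by simp only [Finset.mem_Icc]; omega)]
    rw [Nat.choose_zero_right, Nat.choose_one_right, Nat.choose_self]
    rw [show k+1-0 = k+1 by omega, show k+1-1 = k by omega, show k+1-k = 1 by omega]
    rw [if_neg (by omega : ¬ k = 1)]
    have e1 : (1:ℕ) ::ₘ k ::ₘ s.erase k = 1 ::ₘ s := by rw [Multiset.cons_erase hk]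
    have e2 : k ::ₘ (1:ℕ) ::ₘ s.erase k = 1 ::ₘ s := by
      rw [Multiset.cons_swap, Multiset.cons_erase hk]
    rw [e1, e2, mul_one]
    rw [show k + 1 - 0 = k + 1 by omega]
    rw [show s.count k * (k+1) = s.count k * k + s.count k by ring, add_smul]
    abel

lemma T2eq (s : Multiset ℕ) (hpos : ∀ i ∈ s, 0 < i) :
    dxA (uv 0 * uu s)
      = uu (1 ::ₘ s) + ∑ k ∈ s.toFinset, s.count k • uu (0 ::ₘ (k+1) ::ₘ s.erase k) := by
  classical
  have h0mem : (0:ℕ) ∉ s := fun h => absurd (hpos 0 h) (lt_irrefl 0)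
  rw [← uu_cons, dxA_uu, Multiset.toFinset_cons]
  have h0 : (0:ℕ) ∉ s.toFinset := by rw [Multiset.mem_toFinset]; exact h0mem
  rw [Finset.sum_insert h0]
  congr 1
  · rw [Multiset.count_cons_self, Multiset.count_eq_zero_of_notMem h0mem,
      Multiset.erase_cons_head, ← uu_cons]
    norm_num
  · apply Finset.sum_congr rfl
    intro k hk
    have hkpos : 0 < k := hpos k (Multiset.mem_toFinset.mp hk)
    rw [Multiset.count_cons_of_ne (by omega), Multiset.erase_cons_tail _ (by omega),
      ← uu_cons, Multiset.cons_swap]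

lemma T3eq {n : ℕ} (l : n.Partition) :
    ∃ dc : (n+1).Partition → ℤ,
      (∑ m : (n+1).Partition, if lexLt m (addOne l) then dc m • uP m else 0)
        = ∑ k ∈ l.parts.toFinset, ∑ j ∈ Finset.Icc 2 (k-1),
            (l.parts.count k * k.choose j) • uu (j ::ₘ (k+1-j) ::ₘ l.parts.erase k) := by
  classical
  refine ⟨fun m => ∑ k ∈ l.parts.toFinset, ∑ j ∈ Finset.Icc 2 (k-1),
      if m.parts = j ::ₘ (k+1-j) ::ₘ l.parts.erase k
      then ((l.parts.count k * k.choose j : ℕ) : ℤ) else 0, ?_⟩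
  have step1 : ∀ m : (n+1).Partition,
      (if lexLt m (addOne l) then (∑ k ∈ l.parts.toFinset, ∑ j ∈ Finset.Icc 2 (k-1),
          if m.parts = j ::ₘ (k+1-j) ::ₘ l.parts.erase k
          then ((l.parts.count k * k.choose j : ℕ) : ℤ) else 0) • uP m else 0)
      = ∑ k ∈ l.parts.toFinset, ∑ j ∈ Finset.Icc 2 (k-1),
          (if lexLt m (addOne l) ∧ m.parts = j ::ₘ (k+1-j) ::ₘ l.parts.erase k
            then (l.parts.count k * k.choose j) • uP m else 0) := by
    intro m
    by_cases hlex : lexLt m (addOne l)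
    · rw [if_pos hlex, Finset.sum_smul]
      apply Finset.sum_congr rfl; intro k _
      rw [Finset.sum_smul]
      apply Finset.sum_congr rfl; intro j _
      by_cases hp : m.parts = j ::ₘ (k+1-j) ::ₘ l.parts.erase k
      · rw [if_pos hp, if_pos ⟨hlex, hp⟩, natCast_zsmul]
      · rw [if_neg hp, if_neg (by tauto), zero_smul]
    · rw [if_neg hlex]
      symm; apply Finset.sum_eq_zero; intro k _
      apply Finset.sum_eq_zero; intro j _
      rw [if_neg (by tauto)]
  rw [Finset.sum_congr rfl (fun m _ => step1 m), Finset.sum_comm]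
  apply Finset.sum_congr rfl; intro k hk
  rw [Finset.sum_comm]
  apply Finset.sum_congr rfl; intro j hj
  have hkmem : k ∈ l.parts := Multiset.mem_toFinset.mp hk
  obtain ⟨hj2, hjk⟩ := Finset.mem_Icc.mp hj
  have hkn : k ≤ l.parts.sum := Multiset.le_sum_of_mem hkmem
  have hesum : k + (l.parts.erase k).sum = l.parts.sum := by
    conv_rhs => rw [← Multiset.cons_erase hkmem]
    rw [Multiset.sum_cons]
  have hsum : (j ::ₘ (k+1-j) ::ₘ l.parts.erase k).sum = n + 1 := by
    rw [Multiset.sum_cons, Multiset.sum_cons]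
    have hn : l.parts.sum = n := l.parts_sum
    omega
  have hpos : ∀ i ∈ (j ::ₘ (k+1-j) ::ₘ l.parts.erase k), 0 < i := by
    intro i hi
    rcases Multiset.mem_cons.mp hi with rfl | hi
    · omega
    rcases Multiset.mem_cons.mp hi with rfl | hi
    · omega
    · exact l.parts_pos (Multiset.mem_of_mem_erase hi)
  obtain ⟨μ, hμparts⟩ : ∃ μ : (n+1).Partition,
      μ.parts = j ::ₘ (k+1-j) ::ₘ l.parts.erase k :=
    ⟨⟨j ::ₘ (k+1-j) ::ₘ l.parts.erase k, fun {i} => hpos i, hsum⟩, rfl⟩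
  have hlexμ : lexLt μ (addOne l) := lex_mu l k j hkmem hj2 hjk μ hμparts
  have hcollapse : ∀ m : (n+1).Partition,
      (if lexLt m (addOne l) ∧ m.parts = j ::ₘ (k+1-j) ::ₘ l.parts.erase k
        then (l.parts.count k * k.choose j) • uP m else 0)
      = if m = μ then (l.parts.count k * k.choose j) • uP μ else 0 := by
    intro m
    by_cases hm : m = μ
    · subst hm; rw [if_pos ⟨hlexμ, hμparts⟩, if_pos rfl]
    · rw [if_neg, if_neg hm]
      intro hc
      exact hm (part_ext m μ (by rw [hc.2, hμparts]))
  rw [Finset.sum_congr rfl (fun m _ => hcollapse m),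
    Finset.sum_ite_eq' Finset.univ μ, if_pos (Finset.mem_univ μ)]
  rw [uP_eq_uu, hμparts]

end Aux5

/-- Lemma 2.2: D_{u₀u₁}(u_λ) = (|λ| + ℓ(λ) − m₁(λ) − 1)·u_λ·u₁ + ∂ₓ(u₀·u_λ)
+ ∑_{μ∈𝒫_{|λ|+1}, μ<(λ,1)} d_{λ,μ}·u_μ for some integers d_{λ,μ}. -/
theorem stmt2 (n : ℕ) (hn : 0 < n) (l : n.Partition) :
    ∃ dc : (n+1).Partition → ℤ,
      DopA (uv 0 * uv 1) (uP l) =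
        (((n : ℤ) + Multiset.card l.parts - l.parts.count 1 - 1)) • (uP l * uv 1)
        + dxA (uv 0 * uP l)
        + ∑ m : (n+1).Partition, if lexLt m (addOne l) then dc m • uP m else 0 := by
  classical
  obtain ⟨dc, hdc⟩ := T3eq l
  refine ⟨dc, ?_⟩
  rw [hdc]
  have hupl : uP l = uu l.parts := rfl
  rw [hupl, DopA_uu]
  have hL : ∀ k ∈ l.parts.toFinset,
      l.parts.count k • (dxA^[k] (uv 0 * uv 1) * uu (l.parts.erase k))
      = ∑ j ∈ Finset.range (k+1),
          (l.parts.count k * k.choose j) • uu (j ::ₘ (k+1-j) ::ₘ l.parts.erase k) := by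
    intro k _
    rw [dx_iter_u0u1, Finset.sum_mul, Finset.smul_sum]
    apply Finset.sum_congr rfl; intro j _
    rw [smul_mul_assoc, mul_assoc, ← uu_cons, ← uu_cons, ← mul_smul]
  rw [Finset.sum_congr rfl hL]
  have hperK : ∀ k ∈ l.parts.toFinset,
      (∑ j ∈ Finset.range (k+1),
          (l.parts.count k * k.choose j) • uu (j ::ₘ (k+1-j) ::ₘ l.parts.erase k))
      = l.parts.count k • uu (0 ::ₘ (k+1) ::ₘ l.parts.erase k)
        + (l.parts.count k * (k + 1 - if k = 1 then 1 else 0)) • uu (1 ::ₘ l.parts)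
        + ∑ j ∈ Finset.Icc 2 (k-1),
            (l.parts.count k * k.choose j) • uu (j ::ₘ (k+1-j) ::ₘ l.parts.erase k) := by
    intro k hk
    have hkmem := Multiset.mem_toFinset.mp hk
    exact perK l.parts k (l.parts_pos hkmem) hkmem
  rw [Finset.sum_congr rfl hperK, Finset.sum_add_distrib, Finset.sum_add_distrib,
    ← Finset.sum_smul]
  rw [T2eq l.parts (fun i hi => l.parts_pos hi)]
  have h2 : ∑ k ∈ l.parts.toFinset, l.parts.count k * (if k = 1 then 1 else 0)
      = l.parts.count 1 := by
    have hh : ∀ k ∈ l.parts.toFinset, l.parts.count k * (if k = 1 then 1 else 0)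
        = if k = 1 then l.parts.count 1 else 0 := by
      intro k _; by_cases hk1 : k = 1 <;> simp [hk1]
    rw [Finset.sum_congr rfl hh,
      Finset.sum_ite_eq' l.parts.toFinset 1 (fun _ => l.parts.count 1)]
    by_cases h1 : 1 ∈ l.parts.toFinset
    · rw [if_pos h1]
    · rw [if_neg h1,
        Multiset.count_eq_zero_of_notMem (fun h => h1 (Multiset.mem_toFinset.mpr h))]
  have h1sum : (∑ k ∈ l.parts.toFinset, l.parts.count k * (k + 1 - if k = 1 then 1 else 0))
        + l.parts.count 1 = n + Multiset.card l.parts := by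
    rw [← h2, ← Finset.sum_add_distrib]
    have hh : ∀ k ∈ l.parts.toFinset, (l.parts.count k * (k + 1 - if k = 1 then 1 else 0)
        + l.parts.count k * (if k = 1 then 1 else 0))
        = l.parts.count k * k + l.parts.count k := by
      intro k _
      by_cases hk1 : k = 1
      · subst hk1
        simp
        try ring
      · rw [if_neg hk1, mul_zero, add_zero, Nat.sub_zero]; ring
    rw [Finset.sum_congr rfl hh, Finset.sum_add_distrib, sum_count_mul,
      Multiset.toFinset_sum_count_eq, l.parts_sum]
  have hle : l.parts.count 1 ≤ Multiset.card l.parts := Multiset.count_le_card 1 l.parts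
  have hcast : ((∑ k ∈ l.parts.toFinset,
        l.parts.count k * (k + 1 - if k = 1 then 1 else 0) : ℕ) : ℤ)
      = ((n : ℤ) + Multiset.card l.parts - l.parts.count 1 - 1) + 1 := by
    omega
  have hBsmul : (∑ k ∈ l.parts.toFinset,
        l.parts.count k * (k + 1 - if k = 1 then 1 else 0)) • uu (1 ::ₘ l.parts)
      = ((n : ℤ) + Multiset.card l.parts - l.parts.count 1 - 1) • uu (1 ::ₘ l.parts)
        + uu (1 ::ₘ l.parts) := by
    rw [← natCast_zsmul, hcast, add_smul, one_smul]
  rw [hBsmul]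
  have hx : uu l.parts * uv 1 = uu (1 ::ₘ l.parts) := by rw [uu_cons, mul_comm]
  rw [hx]
  abel


end RiemannPaper
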